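/- One-shot achievability for the Gelfand–Pinsker channel: Let q_S be a state pmf on a finite set 𝒮 and q_{Y|X,S} a channel from 𝒳 × 𝒮 to 𝒴. For any conditional pmf q_{U|S} from 𝒮 to a finite set 𝒰, any function x : 𝒰 × 𝒮 → 𝒳, and any positive integers M and J, define the joint pmf q(u,s,x,y) = q(s)·q(u|s)·1[x = x(u,s)]·q(y|x,s). Then there exists an M-code (a stochastic encoder φ : [1:M] × 𝒮 → 𝒳 and a stochastic decoder ψ : 𝒴 → [1:M]) such that, with the message M uniform on [1:M] and independent of S ~ q_S, X generated by φ from (M,S), Y generated by q_{Y|X,S}, and M̂ = ψ(Y), the probability of correct decoding satisfies P(M̂ = M) ≥ E_{(U,S,Y) ~ q} [ 1 / ( (1 + J^{−1}·2^{i_q(U;S)}) · (1 + M·J·2^{−i_q(U;Y)}) ) ]. -/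

import Mathlib

open scoped BigOperators

/-- A pmf on a finite type, represented by a nonnegative real-valued function summing to 1. -/
structure FinPMF (α : Type) [Fintype α] where
  p : α → ℝ
  nonneg : ∀ a, 0 ≤ p a
  sum_eq_one : ∑ a, p a = 1

variable {𝓢 𝓤 𝓧 𝓨 : Type} [Fintype 𝓢] [Fintype 𝓤] [Fintype 𝓧] [Fintype 𝓨]

/-- The joint pmf on `(u, s, y)` induced by
`q(u,s,x,y) = q(s) q(u|s) 1[x = x(u,s)] q(y|x,s)` after marginalizing out the
deterministic `x`. -/
noncomputable def qUSY (qS : FinPMF 𝓢) (qU : 𝓢 → FinPMF 𝓤)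
    (W : 𝓧 → 𝓢 → FinPMF 𝓨) (f : 𝓤 → 𝓢 → 𝓧) (u : 𝓤) (s : 𝓢) (y : 𝓨) : ℝ :=
  qS.p s * (qU s).p u * (W (f u s) s).p y

/-- Information density `i_q(U;S)` evaluated at `(u,s)`. -/
noncomputable def iUS (qS : FinPMF 𝓢) (qU : 𝓢 → FinPMF 𝓤) (u : 𝓤) (s : 𝓢) : ℝ :=
  Real.logb 2 ((qS.p s * (qU s).p u) /
    ((∑ s', qS.p s' * (qU s').p u) * qS.p s))

/-- Information density `i_q(U;Y)` evaluated at `(u,y)`. -/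
noncomputable def iUY (qS : FinPMF 𝓢) (qU : 𝓢 → FinPMF 𝓤)
    (W : 𝓧 → 𝓢 → FinPMF 𝓨) (f : 𝓤 → 𝓢 → 𝓧) (u : 𝓤) (y : 𝓨) : ℝ :=
  Real.logb 2 ((∑ s, qUSY qS qU W f u s y) /
    ((∑ s', qS.p s' * (qU s').p u) * (∑ u', ∑ s', qUSY qS qU W f u' s' y)))

/-- Probability of correct decoding for an `M`-code over the state-dependent channel:
message uniform on `Fin M` independent of `S ~ qS`, `X` generated by the stochastic
encoder from `(m, s)`, `Y` by the channel from `(x, s)`, `M̂` by the stochastic decoder. -/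
noncomputable def pCorrectGP (M : ℕ) (qS : FinPMF 𝓢) (W : 𝓧 → 𝓢 → FinPMF 𝓨)
    (enc : Fin M → 𝓢 → FinPMF 𝓧) (dec : 𝓨 → FinPMF (Fin M)) : ℝ :=
  ∑ m : Fin M, ∑ s : 𝓢, ∑ x : 𝓧, ∑ y : 𝓨,
    (1 / (M : ℝ)) * qS.p s * (enc m s).p x * (W x s).p y * (dec y).p m

set_option linter.unusedSectionVars false
set_option linter.unusedVariables false
open Finset

namespace GPaux

lemma amgm3 (P Q D : ℝ) (hP : 0 < P) (hQ : 0 < Q) (hD : 0 < D) :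
    3*(P*Q*D) ≤ D^3 + P^2*Q + P*Q^2 := by
  rcases le_total (P + Q) (3*D) with h | h
  · nlinarith [mul_nonneg (sq_nonneg (P - Q)) (by linarith : (0:ℝ) ≤ 3*D - (P+Q)),
               mul_nonneg (sq_nonneg (P + Q - 2*D)) (by positivity : (0:ℝ) ≤ P + Q + D)]
  · nlinarith [mul_nonneg (mul_pos hP hQ).le (by linarith : (0:ℝ) ≤ P + Q - 3*D), pow_pos hD 3]

lemma tangent {a b p q p0 q0 : ℝ} (ha : 0 < a) (hb : 0 < b)
    (hp : a ≤ p) (hq : b ≤ q) (hp0 : a ≤ p0) (hq0 : b ≤ q0) :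
    a*b/(p0*q0) * (1 + (p0 - p)/p0 + (q0 - q)/q0) ≤ (a/p) * (b/q) := by
  have hpp : 0 < p := lt_of_lt_of_le ha hp
  have hqq : 0 < q := lt_of_lt_of_le hb hq
  have hpp0 : 0 < p0 := lt_of_lt_of_le ha hp0
  have hqq0 : 0 < q0 := lt_of_lt_of_le hb hq0
  have key : p*q*(3*(p0*q0) - p*q0 - q*p0) ≤ p0^2*q0^2 := by
    have h := amgm3 (p*q0) (q*p0) (p0*q0) (by positivity) (by positivity) (by positivity)
    rw [← mul_le_mul_iff_of_pos_right (mul_pos hpp0 hqq0)]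
    nlinarith [h]
  have hL : a*b/(p0*q0) * (1 + (p0 - p)/p0 + (q0 - q)/q0)
      = a*b*(3*(p0*q0) - p*q0 - q*p0)/(p0^2*q0^2) := by
    field_simp
    ring
  rw [hL, div_mul_div_comm, div_le_div_iff₀ (by positivity) (by positivity)]
  nlinarith [mul_le_mul_of_nonneg_left key (le_of_lt (mul_pos ha hb))]

lemma sum_prod_eval {K : Type} [Fintype K] [DecidableEq K] {α : Type} [Fintype α]
    (h : K → α → ℝ) : ∑ c : K → α, ∏ k, h k (c k) = ∏ k, ∑ v, h k v :=
  (Fintype.prod_sum h).symm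

lemma sum_ind_prod {K : Type} [Fintype K] [DecidableEq K] {α : Type} [Fintype α] [DecidableEq α]
    (g : α → ℝ) (hsum : ∑ v, g v = 1) (k0 : K) (u : α) :
    ∑ c : K → α, (if c k0 = u then (1:ℝ) else 0) * ∏ k, g (c k) = g u := by
  have h1 : ∀ c : K → α, (if c k0 = u then (1:ℝ) else 0) * ∏ k, g (c k)
      = ∏ k, ((if k = k0 then (if c k = u then (1:ℝ) else 0) else 1) * g (c k)) := by
    intro c
    rw [Finset.prod_mul_distrib, Finset.prod_ite_eq' Finset.univ k0
      (fun k => if c k = u then (1:ℝ) else 0)]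
    simp
  calc ∑ c : K → α, (if c k0 = u then (1:ℝ) else 0) * ∏ k, g (c k)
      = ∑ c : K → α, ∏ k, ((if k = k0 then (if c k = u then (1:ℝ) else 0) else 1) * g (c k)) :=
        Finset.sum_congr rfl (fun c _ => h1 c)
    _ = ∏ k, ∑ v, ((if k = k0 then (if v = u then (1:ℝ) else 0) else 1) * g v) :=
        sum_prod_eval (fun k v => (if k = k0 then (if v = u then (1:ℝ) else 0) else 1) * g v)
    _ = ∏ k, (if k = k0 then g u else 1) := by
        refine Finset.prod_congr rfl (fun k _ => ?_)
        by_cases hk : k = k0 <;> simp [hk, hsum, ite_mul, Finset.sum_ite_eq']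
    _ = g u := by rw [Finset.prod_ite_eq' Finset.univ k0 (fun _ => g u)]; simp

lemma sum_ind_prod_mul {K : Type} [Fintype K] [DecidableEq K] {α : Type} [Fintype α] [DecidableEq α]
    (g φ : α → ℝ) (hsum : ∑ v, g v = 1) (k0 k1 : K) (hk : k1 ≠ k0) (u : α) :
    ∑ c : K → α, (if c k0 = u then (1:ℝ) else 0) * (∏ k, g (c k)) * φ (c k1)
      = g u * ∑ v, g v * φ v := by
  have h1 : ∀ c : K → α, (if c k0 = u then (1:ℝ) else 0) * (∏ k, g (c k)) * φ (c k1)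
      = ∏ k, ((if k = k0 then (if c k = u then (1:ℝ) else 0) else 1) *
              ((if k = k1 then φ (c k) else 1) * g (c k))) := by
    intro c
    rw [Finset.prod_mul_distrib, Finset.prod_mul_distrib,
      Finset.prod_ite_eq' Finset.univ k0 (fun k => if c k = u then (1:ℝ) else 0),
      Finset.prod_ite_eq' Finset.univ k1 (fun k => φ (c k))]
    simp
    ring
  calc ∑ c : K → α, (if c k0 = u then (1:ℝ) else 0) * (∏ k, g (c k)) * φ (c k1)
      = ∑ c : K → α, ∏ k, ((if k = k0 then (if c k = u then (1:ℝ) else 0) else 1) *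
              ((if k = k1 then φ (c k) else 1) * g (c k))) :=
        Finset.sum_congr rfl (fun c _ => h1 c)
    _ = ∏ k, ∑ v, ((if k = k0 then (if v = u then (1:ℝ) else 0) else 1) *
              ((if k = k1 then φ v else 1) * g v)) := sum_prod_eval (fun k v => (if k = k0 then (if v = u then (1:ℝ) else 0) else 1) * ((if k = k1 then φ v else 1) * g v))
    _ = ∏ k, ((if k = k0 then g u else 1) * (if k = k1 then (∑ v, g v * φ v) else 1)) := by
        refine Finset.prod_congr rfl (fun k _ => ?_)
        by_cases hk0 : k = k0
        · have : k ≠ k1 := by rw [hk0]; exact fun h => hk h.symm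
          have h01 : k0 ≠ k1 := fun h => hk h.symm
          simp [hk0, this, h01, hsum, ite_mul, Finset.sum_ite_eq']
        · by_cases hk1 : k = k1
          · simp [hk0, hk1, hk, hsum, mul_comm]
          · simp [hk0, hk1, hsum]
    _ = g u * ∑ v, g v * φ v := by
        rw [Finset.prod_mul_distrib,
          Finset.prod_ite_eq' Finset.univ k0 (fun _ => g u),
          Finset.prod_ite_eq' Finset.univ k1 (fun _ => ∑ v, g v * φ v)]
        simp


lemma FinPMF.le_one {α : Type} [Fintype α] (P : FinPMF α) (a : α) : P.p a ≤ 1 := by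
  rw [← P.sum_eq_one]
  exact Finset.single_le_sum (fun i _ => P.nonneg i) (Finset.mem_univ a)

variable (qS : FinPMF 𝓢) (qU : 𝓢 → FinPMF 𝓤) (Wc : 𝓧 → 𝓢 → FinPMF 𝓨) (f : 𝓤 → 𝓢 → 𝓧)

noncomputable def g (u : 𝓤) : ℝ := ∑ s, qS.p s * (qU s).p u
noncomputable def n (s : 𝓢) (u : 𝓤) : ℝ := qS.p s * (qU s).p u
noncomputable def w (s : 𝓢) (u : 𝓤) : ℝ := n qS qU s u / g qS qU u
noncomputable def nL (u : 𝓤) (y : 𝓨) : ℝ := ∑ s, qUSY qS qU Wc f u s y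
noncomputable def qY (y : 𝓨) : ℝ := ∑ u, ∑ s, qUSY qS qU Wc f u s y
noncomputable def L (y : 𝓨) (u : 𝓤) : ℝ := nL qS qU Wc f u y / g qS qU u

lemma n_nonneg (s : 𝓢) (u : 𝓤) : 0 ≤ n qS qU s u :=
  mul_nonneg (qS.nonneg s) ((qU s).nonneg u)

lemma g_nonneg (u : 𝓤) : 0 ≤ g qS qU u :=
  Finset.sum_nonneg fun s _ => n_nonneg qS qU s u

lemma w_nonneg (s : 𝓢) (u : 𝓤) : 0 ≤ w qS qU s u :=
  div_nonneg (n_nonneg qS qU s u) (g_nonneg qS qU u)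

lemma qUSY_nonneg (u : 𝓤) (s : 𝓢) (y : 𝓨) : 0 ≤ qUSY qS qU Wc f u s y :=
  mul_nonneg (mul_nonneg (qS.nonneg s) ((qU s).nonneg u)) ((Wc (f u s) s).nonneg y)

lemma nL_nonneg (u : 𝓤) (y : 𝓨) : 0 ≤ nL qS qU Wc f u y :=
  Finset.sum_nonneg fun s _ => qUSY_nonneg qS qU Wc f u s y

lemma L_nonneg (y : 𝓨) (u : 𝓤) : 0 ≤ L qS qU Wc f y u :=
  div_nonneg (nL_nonneg qS qU Wc f u y) (g_nonneg qS qU u)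

lemma n_le_g (s : 𝓢) (u : 𝓤) : n qS qU s u ≤ g qS qU u :=
  Finset.single_le_sum (fun s' _ => n_nonneg qS qU s' u) (Finset.mem_univ s)

set_option linter.unusedSectionVars false in
lemma sum_g : ∑ u, g qS qU u = 1 := by
  have : ∀ s, ∑ u, qS.p s * (qU s).p u = qS.p s := by
    intro s; rw [← Finset.mul_sum, (qU s).sum_eq_one, mul_one]
  simp only [g]
  rw [Finset.sum_comm]
  simp only [this, qS.sum_eq_one]

lemma g_mul_w (s : 𝓢) (u : 𝓤) : g qS qU u * w qS qU s u = n qS qU s u := by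
  by_cases hg : g qS qU u = 0
  · have hn : n qS qU s u = 0 :=
      le_antisymm (hg ▸ n_le_g qS qU s u) (n_nonneg qS qU s u)
    simp [w, hg, hn]
  · rw [w, mul_div_cancel₀ _ hg]

lemma sum_g_mul_w (s : 𝓢) : ∑ u, g qS qU u * w qS qU s u = qS.p s := by
  simp only [g_mul_w]
  simp only [n, ← Finset.mul_sum, (qU s).sum_eq_one, mul_one]

lemma qUSY_le_n (u : 𝓤) (s : 𝓢) (y : 𝓨) : qUSY qS qU Wc f u s y ≤ n qS qU s u := by
  have := FinPMF.le_one (Wc (f u s) s) y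
  calc qUSY qS qU Wc f u s y ≤ n qS qU s u * 1 :=
        mul_le_mul_of_nonneg_left this (n_nonneg qS qU s u)
    _ = n qS qU s u := mul_one _

lemma nL_le_g (u : 𝓤) (y : 𝓨) : nL qS qU Wc f u y ≤ g qS qU u :=
  Finset.sum_le_sum fun s _ => qUSY_le_n qS qU Wc f u s y

lemma g_mul_L (y : 𝓨) (u : 𝓤) : g qS qU u * L qS qU Wc f y u = nL qS qU Wc f u y := by
  by_cases hg : g qS qU u = 0
  · have hn : nL qS qU Wc f u y = 0 :=
      le_antisymm (hg ▸ nL_le_g qS qU Wc f u y) (nL_nonneg qS qU Wc f u y)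
    simp [L, hg, hn]
  · rw [L, mul_div_cancel₀ _ hg]

lemma sum_g_mul_L (y : 𝓨) : ∑ u, g qS qU u * L qS qU Wc f y u = qY qS qU Wc f y := by
  simp only [g_mul_L, nL, qY]

open scoped Classical

variable {M J : ℕ}

noncomputable def Pc (c : Fin M × Fin J → 𝓤) : ℝ := ∏ k, g qS qU (c k)

noncomputable def tw (c : Fin M × Fin J → 𝓤) (m : Fin M) (s : 𝓢) : ℝ :=
  ∑ j, w qS qU s (c (m, j))

noncomputable def tL (c : Fin M × Fin J → 𝓤) (y : 𝓨) : ℝ :=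
  ∑ k, L qS qU Wc f y (c k)

lemma Pc_nonneg (c : Fin M × Fin J → 𝓤) : 0 ≤ Pc qS qU c :=
  Finset.prod_nonneg fun k _ => g_nonneg qS qU (c k)

lemma tw_nonneg (c : Fin M × Fin J → 𝓤) (m : Fin M) (s : 𝓢) : 0 ≤ tw qS qU c m s :=
  Finset.sum_nonneg fun j _ => w_nonneg qS qU s (c (m, j))

lemma tL_nonneg (c : Fin M × Fin J → 𝓤) (y : 𝓨) : 0 ≤ tL qS qU Wc f c y :=
  Finset.sum_nonneg fun k _ => L_nonneg qS qU Wc f y (c k)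

noncomputable def enc (hJ : 0 < J) (c : Fin M × Fin J → 𝓤) (m : Fin M) (s : 𝓢) :
    FinPMF 𝓧 where
  p := fun x => ∑ j, (if tw qS qU c m s = 0 then (J:ℝ)⁻¹
      else w qS qU s (c (m, j)) / tw qS qU c m s) * (if f (c (m, j)) s = x then 1 else 0)
  nonneg := by
    intro x
    refine Finset.sum_nonneg fun j _ => mul_nonneg ?_ ?_
    · split_ifs
      · positivity
      · exact div_nonneg (w_nonneg qS qU s (c (m, j))) (tw_nonneg qS qU c m s)
    · split_ifs <;> norm_num
  sum_eq_one := by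
    rw [Finset.sum_comm]
    have h1 : ∀ j : Fin J, ∑ x : 𝓧, (if tw qS qU c m s = 0 then (J:ℝ)⁻¹
        else w qS qU s (c (m, j)) / tw qS qU c m s) * (if f (c (m, j)) s = x then 1 else 0)
        = (if tw qS qU c m s = 0 then (J:ℝ)⁻¹
        else w qS qU s (c (m, j)) / tw qS qU c m s) := by
      intro j
      rw [← Finset.mul_sum]
      simp [Finset.sum_ite_eq]
    simp only [h1]
    by_cases htw : tw qS qU c m s = 0
    · simp only [htw, if_true, Finset.sum_const, Finset.card_univ, Fintype.card_fin,
        nsmul_eq_mul]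
      rw [mul_inv_cancel₀ (by exact_mod_cast hJ.ne')]
    · simp only [htw, if_false]
      rw [← Finset.sum_div]
      exact div_self htw

noncomputable def dec (hM : 0 < M) (c : Fin M × Fin J → 𝓤) (y : 𝓨) :
    FinPMF (Fin M) where
  p := fun m => if tL qS qU Wc f c y = 0 then (M:ℝ)⁻¹
      else (∑ j, L qS qU Wc f y (c (m, j))) / tL qS qU Wc f c y
  nonneg := by
    intro m
    split_ifs
    · positivity
    · exact div_nonneg (Finset.sum_nonneg fun j _ => L_nonneg qS qU Wc f y (c (m, j)))
        (tL_nonneg qS qU Wc f c y)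
  sum_eq_one := by
    by_cases h : tL qS qU Wc f c y = 0
    · simp only [h, if_true, Finset.sum_const, Finset.card_univ, Fintype.card_fin,
        nsmul_eq_mul]
      rw [mul_inv_cancel₀ (by exact_mod_cast hM.ne')]
    · simp only [h, if_false]
      rw [← Finset.sum_div]
      rw [← Fintype.sum_prod_type (f := fun k : Fin M × Fin J => L qS qU Wc f y (c k))]
      exact div_self h

lemma dec_ge (hM : 0 < M) (c : Fin M × Fin J → 𝓤) (y : 𝓨) (m : Fin M) (j : Fin J) :
    L qS qU Wc f y (c (m, j)) / tL qS qU Wc f c y ≤ (dec qS qU Wc f hM c y).p m := by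
  simp only [dec]
  by_cases h : tL qS qU Wc f c y = 0
  · simp only [h, if_true, div_zero]
    positivity
  · simp only [h, if_false]
    have htL : 0 < tL qS qU Wc f c y := lt_of_le_of_ne (tL_nonneg qS qU Wc f c y) (Ne.symm h)
    gcongr
    exact Finset.single_le_sum (fun j' _ => L_nonneg qS qU Wc f y (c (m, j'))) (Finset.mem_univ j)

lemma pCorrect_ge (hM : 0 < M) (hJ : 0 < J) (c : Fin M × Fin J → 𝓤) :
    ∑ m : Fin M, ∑ s : 𝓢, ∑ y : 𝓨, ∑ j : Fin J,
      (1 / (M : ℝ)) * qS.p s *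
        ((w qS qU s (c (m, j)) / tw qS qU c m s) *
         ((Wc (f (c (m, j)) s) s).p y *
          (L qS qU Wc f y (c (m, j)) / tL qS qU Wc f c y)))
      ≤ pCorrectGP M qS Wc (enc qS qU f hJ c) (dec qS qU Wc f hM c) := by
  unfold pCorrectGP
  refine Finset.sum_le_sum fun m _ => Finset.sum_le_sum fun s _ => ?_
  have hx : (∑ x : 𝓧, ∑ y : 𝓨, (1 / (M:ℝ)) * qS.p s * (enc qS qU f hJ c m s).p x *
        (Wc x s).p y * (dec qS qU Wc f hM c y).p m)
      = ∑ y : 𝓨, ∑ j : Fin J, (1 / (M:ℝ)) * qS.p s *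
        ((if tw qS qU c m s = 0 then (J:ℝ)⁻¹ else w qS qU s (c (m, j)) / tw qS qU c m s) *
         ((Wc (f (c (m, j)) s) s).p y * (dec qS qU Wc f hM c y).p m)) := by
    rw [Finset.sum_comm]
    refine Finset.sum_congr rfl fun y _ => ?_
    simp only [enc]
    calc (∑ x : 𝓧, (1 / (M:ℝ)) * qS.p s *
            (∑ j : Fin J, (if tw qS qU c m s = 0 then (J:ℝ)⁻¹
              else w qS qU s (c (m, j)) / tw qS qU c m s) *
              (if f (c (m, j)) s = x then 1 else 0)) *
            (Wc x s).p y * (dec qS qU Wc f hM c y).p m)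
        = ∑ x : 𝓧, ∑ j : Fin J, (1 / (M:ℝ)) * qS.p s *
            ((if tw qS qU c m s = 0 then (J:ℝ)⁻¹
              else w qS qU s (c (m, j)) / tw qS qU c m s) *
              (if f (c (m, j)) s = x then 1 else 0)) *
            (Wc x s).p y * (dec qS qU Wc f hM c y).p m := by
          refine Finset.sum_congr rfl fun x _ => ?_
          rw [Finset.mul_sum, Finset.sum_mul, Finset.sum_mul]
      _ = ∑ j : Fin J, ∑ x : 𝓧, (1 / (M:ℝ)) * qS.p s *
            ((if tw qS qU c m s = 0 then (J:ℝ)⁻¹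
              else w qS qU s (c (m, j)) / tw qS qU c m s) *
              (if f (c (m, j)) s = x then 1 else 0)) *
            (Wc x s).p y * (dec qS qU Wc f hM c y).p m := Finset.sum_comm
      _ = ∑ j : Fin J, (1 / (M:ℝ)) * qS.p s *
            ((if tw qS qU c m s = 0 then (J:ℝ)⁻¹
              else w qS qU s (c (m, j)) / tw qS qU c m s) *
             ((Wc (f (c (m, j)) s) s).p y * (dec qS qU Wc f hM c y).p m)) := by
          refine Finset.sum_congr rfl fun j _ => ?_
          simp only [mul_ite, ite_mul, mul_one, mul_zero, zero_mul, Finset.sum_ite_eq,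
            Finset.mem_univ, if_true]
          ring
  rw [hx]
  refine Finset.sum_le_sum fun y _ => Finset.sum_le_sum fun j _ => ?_
  have h1 : w qS qU s (c (m, j)) / tw qS qU c m s
      ≤ (if tw qS qU c m s = 0 then (J:ℝ)⁻¹ else w qS qU s (c (m, j)) / tw qS qU c m s) := by
    by_cases htw : tw qS qU c m s = 0
    · simp only [htw, div_zero, if_true]
      positivity
    · simp [htw]
  have h2 := dec_ge qS qU Wc f hM c y m j
  have hWp : (0:ℝ) ≤ (Wc (f (c (m, j)) s) s).p y := (Wc (f (c (m, j)) s) s).nonneg y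
  refine mul_le_mul_of_nonneg_left (mul_le_mul h1 (mul_le_mul_of_nonneg_left h2 hWp) ?_ ?_) ?_
  · exact mul_nonneg hWp (div_nonneg (L_nonneg qS qU Wc f y (c (m, j)))
      (tL_nonneg qS qU Wc f c y))
  · by_cases htw : tw qS qU c m s = 0
    · simp only [htw, if_true]; positivity
    · simp only [htw, if_false]
      exact div_nonneg (w_nonneg qS qU s (c (m, j))) (tw_nonneg qS qU c m s)
  · have := qS.nonneg s
    positivity


lemma core_calc (nn nl gu σ ρ Wp Mr Jr : ℝ) (hnn : 0 < nn) (hnl : 0 < nl) (hgu : 0 < gu)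
    (hσ : 0 < σ) (hρ : 0 < ρ) (hMr : 0 < Mr) (hJr : 0 < Jr) :
    Jr⁻¹ * ((nn * Wp) * ((1 + Jr⁻¹ * (nn/(gu*σ))) * (1 + Mr*Jr*((gu*ρ)/nl)))⁻¹)
      = σ * (Wp * ((nn/gu)*(nl/gu)/((nn/gu + Jr*σ)*(nl/gu + Mr*Jr*ρ))) * gu) := by
  have h1 : (0:ℝ) < 1 + Jr⁻¹ * (nn/(gu*σ)) := by positivity
  have h2 : (0:ℝ) < 1 + Mr*Jr*((gu*ρ)/nl) := by positivity
  have h3 : (0:ℝ) < nn/gu + Jr*σ := by positivity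
  have h4 : (0:ℝ) < nl/gu + Mr*Jr*ρ := by positivity
  field_simp
  ring

lemma core (hM : 0 < M) (hJ : 0 < J) (m : Fin M) (j : Fin J) (s : 𝓢) (y : 𝓨) (u : 𝓤) :
    (J:ℝ)⁻¹ * (qUSY qS qU Wc f u s y *
      ((1 + (J:ℝ)⁻¹ * (2:ℝ) ^ (iUS qS qU u s)) *
       (1 + (M:ℝ) * (J:ℝ) * (2:ℝ) ^ (-(iUY qS qU Wc f u y))))⁻¹)
    ≤ qS.p s * ∑ c : Fin M × Fin J → 𝓤, (if c (m, j) = u then (1:ℝ) else 0) * Pc qS qU c * ((w qS qU s u / tw qS qU c m s) * ((Wc (f u s) s).p y * (L qS qU Wc f y u / tL qS qU Wc f c y))) := by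
  classical
  by_cases h0 : qUSY qS qU Wc f u s y = 0
  · rw [h0, zero_mul, mul_zero]
    refine mul_nonneg (qS.nonneg s) (Finset.sum_nonneg fun c _ => ?_)
    refine mul_nonneg (mul_nonneg ?_ (Pc_nonneg qS qU c)) ?_
    · split_ifs <;> norm_num
    · refine mul_nonneg (div_nonneg (w_nonneg qS qU s u) (tw_nonneg qS qU c m s)) ?_
      exact mul_nonneg ((Wc (f u s) s).nonneg y)
        (div_nonneg (L_nonneg qS qU Wc f y u) (tL_nonneg qS qU Wc f c y))
  have hq3 : 0 < qUSY qS qU Wc f u s y :=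
    lt_of_le_of_ne (qUSY_nonneg qS qU Wc f u s y) (Ne.symm h0)
  have hq3' : 0 < qS.p s * (qU s).p u * (Wc (f u s) s).p y := hq3
  have hσ : 0 < qS.p s := by
    by_contra hc; push_neg at hc
    have h1 : qS.p s = 0 := le_antisymm hc (qS.nonneg s)
    rw [h1] at hq3'; simp at hq3'
  have hpu : 0 < (qU s).p u := by
    by_contra hc; push_neg at hc
    have h1 : (qU s).p u = 0 := le_antisymm hc ((qU s).nonneg u)
    rw [h1] at hq3'; simp at hq3'
  have hWp : 0 < (Wc (f u s) s).p y := by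
    by_contra hc; push_neg at hc
    have h1 : (Wc (f u s) s).p y = 0 := le_antisymm hc ((Wc (f u s) s).nonneg y)
    rw [h1] at hq3'; simp at hq3'
  have hnn : 0 < n qS qU s u := mul_pos hσ hpu
  have hgu : 0 < g qS qU u := lt_of_lt_of_le hnn (n_le_g qS qU s u)
  have hnl : 0 < nL qS qU Wc f u y :=
    lt_of_lt_of_le hq3 (Finset.single_le_sum
      (fun s' _ => qUSY_nonneg qS qU Wc f u s' y) (Finset.mem_univ s))
  have hρ : 0 < qY qS qU Wc f y :=
    lt_of_lt_of_le hnl (Finset.single_le_sum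
      (fun u' _ => nL_nonneg qS qU Wc f u' y) (Finset.mem_univ u))
  have ha : 0 < w qS qU s u := div_pos hnn hgu
  have hb : 0 < L qS qU Wc f y u := div_pos hnl hgu
  have hJr : (0:ℝ) < (J:ℝ) := by exact_mod_cast hJ
  have hMr : (0:ℝ) < (M:ℝ) := by exact_mod_cast hM
  have hP0 : 0 < (w qS qU s u + (J:ℝ)*qS.p s) := by
    have : 0 < (J:ℝ)*qS.p s := mul_pos hJr hσ
    linarith
  have hQ0 : 0 < (L qS qU Wc f y u + (M:ℝ)*(J:ℝ)*qY qS qU Wc f y) := by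
    have : 0 < (M:ℝ)*(J:ℝ)*qY qS qU Wc f y := mul_pos (mul_pos hMr hJr) hρ
    linarith
  have hTH : 0 ≤ (w qS qU s u*L qS qU Wc f y u/((w qS qU s u + (J:ℝ)*qS.p s)*(L qS qU Wc f y u + (M:ℝ)*(J:ℝ)*qY qS qU Wc f y))) :=
    div_nonneg (mul_nonneg ha.le hb.le) (mul_nonneg hP0.le hQ0.le)
  have hiUS : (2:ℝ) ^ (iUS qS qU u s) = n qS qU s u / (g qS qU u * qS.p s) := by
    have harg : (0:ℝ) < n qS qU s u / (g qS qU u * qS.p s) := div_pos hnn (mul_pos hgu hσ)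
    have h1 : iUS qS qU u s = Real.logb 2 (n qS qU s u / (g qS qU u * qS.p s)) := rfl
    rw [h1, Real.rpow_logb (by norm_num) (by norm_num) harg]
  have hiUY : (2:ℝ) ^ (-(iUY qS qU Wc f u y)) = (g qS qU u * qY qS qU Wc f y) / nL qS qU Wc f u y := by
    have harg : (0:ℝ) < nL qS qU Wc f u y / (g qS qU u * qY qS qU Wc f y) := div_pos hnl (mul_pos hgu hρ)
    have h1 : iUY qS qU Wc f u y = Real.logb 2 (nL qS qU Wc f u y / (g qS qU u * qY qS qU Wc f y)) := rfl
    rw [h1, Real.rpow_neg (by norm_num), Real.rpow_logb (by norm_num) (by norm_num) harg,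
      inv_div]
  have hAnn : ∀ c : Fin M × Fin J → 𝓤, 0 ≤ (∑ j' ∈ Finset.univ.erase j, w qS qU s (c (m, j'))) :=
    fun c => Finset.sum_nonneg fun j' _ => w_nonneg qS qU s (c (m, j'))
  have hBnn : ∀ c : Fin M × Fin J → 𝓤, 0 ≤ (∑ k ∈ Finset.univ.erase (m, j), L qS qU Wc f y (c k)) :=
    fun c => Finset.sum_nonneg fun k _ => L_nonneg qS qU Wc f y (c k)
  have htwc : ∀ c : Fin M × Fin J → 𝓤, c (m, j) = u → tw qS qU c m s = w qS qU s u + (∑ j' ∈ Finset.univ.erase j, w qS qU s (c (m, j'))) := by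
    intro c hc
    have h1 : tw qS qU c m s = ∑ j', w qS qU s (c (m, j')) := rfl
    rw [h1, ← Finset.add_sum_erase Finset.univ (fun j' => w qS qU s (c (m, j')))
      (Finset.mem_univ j), hc]
  have htLc : ∀ c : Fin M × Fin J → 𝓤, c (m, j) = u → tL qS qU Wc f c y = L qS qU Wc f y u + (∑ k ∈ Finset.univ.erase (m, j), L qS qU Wc f y (c k)) := by
    intro c hc
    have h1 : tL qS qU Wc f c y = ∑ k, L qS qU Wc f y (c k) := rfl
    rw [h1, ← Finset.add_sum_erase Finset.univ (fun k => L qS qU Wc f y (c k))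
      (Finset.mem_univ (m, j)), hc]
  have hpoint : ∀ c : Fin M × Fin J → 𝓤,
      (Wc (f u s) s).p y*(w qS qU s u*L qS qU Wc f y u/((w qS qU s u + (J:ℝ)*qS.p s)*(L qS qU Wc f y u + (M:ℝ)*(J:ℝ)*qY qS qU Wc f y)))*(1 + (J:ℝ)*qS.p s/(w qS qU s u + (J:ℝ)*qS.p s) + (M:ℝ)*(J:ℝ)*qY qS qU Wc f y/(L qS qU Wc f y u + (M:ℝ)*(J:ℝ)*qY qS qU Wc f y)) * ((if c (m, j) = u then (1:ℝ) else 0) * Pc qS qU c)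
        - (Wc (f u s) s).p y*(w qS qU s u*L qS qU Wc f y u/((w qS qU s u + (J:ℝ)*qS.p s)*(L qS qU Wc f y u + (M:ℝ)*(J:ℝ)*qY qS qU Wc f y)))/(w qS qU s u + (J:ℝ)*qS.p s) * ((if c (m, j) = u then (1:ℝ) else 0) * Pc qS qU c * (∑ j' ∈ Finset.univ.erase j, w qS qU s (c (m, j'))))
        - (Wc (f u s) s).p y*(w qS qU s u*L qS qU Wc f y u/((w qS qU s u + (J:ℝ)*qS.p s)*(L qS qU Wc f y u + (M:ℝ)*(J:ℝ)*qY qS qU Wc f y)))/(L qS qU Wc f y u + (M:ℝ)*(J:ℝ)*qY qS qU Wc f y) * ((if c (m, j) = u then (1:ℝ) else 0) * Pc qS qU c * (∑ k ∈ Finset.univ.erase (m, j), L qS qU Wc f y (c k)))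
      ≤ (if c (m, j) = u then (1:ℝ) else 0) * Pc qS qU c * ((w qS qU s u / tw qS qU c m s) * ((Wc (f u s) s).p y * (L qS qU Wc f y u / tL qS qU Wc f c y))) := by
    intro c
    by_cases hc : c (m, j) = u
    · rw [if_pos hc, htwc c hc, htLc c hc]
      have ht := tangent ha hb (le_add_of_nonneg_right (hAnn c))
        (le_add_of_nonneg_right (hBnn c))
        (le_add_of_nonneg_right (mul_pos hJr hσ).le)
        (le_add_of_nonneg_right (mul_pos (mul_pos hMr hJr) hρ).le)
      calc (Wc (f u s) s).p y*(w qS qU s u*L qS qU Wc f y u/((w qS qU s u + (J:ℝ)*qS.p s)*(L qS qU Wc f y u + (M:ℝ)*(J:ℝ)*qY qS qU Wc f y)))*(1 + (J:ℝ)*qS.p s/(w qS qU s u + (J:ℝ)*qS.p s) + (M:ℝ)*(J:ℝ)*qY qS qU Wc f y/(L qS qU Wc f y u + (M:ℝ)*(J:ℝ)*qY qS qU Wc f y)) * ((1:ℝ) * Pc qS qU c)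
            - (Wc (f u s) s).p y*(w qS qU s u*L qS qU Wc f y u/((w qS qU s u + (J:ℝ)*qS.p s)*(L qS qU Wc f y u + (M:ℝ)*(J:ℝ)*qY qS qU Wc f y)))/(w qS qU s u + (J:ℝ)*qS.p s) * ((1:ℝ) * Pc qS qU c * (∑ j' ∈ Finset.univ.erase j, w qS qU s (c (m, j'))))
            - (Wc (f u s) s).p y*(w qS qU s u*L qS qU Wc f y u/((w qS qU s u + (J:ℝ)*qS.p s)*(L qS qU Wc f y u + (M:ℝ)*(J:ℝ)*qY qS qU Wc f y)))/(L qS qU Wc f y u + (M:ℝ)*(J:ℝ)*qY qS qU Wc f y) * ((1:ℝ) * Pc qS qU c * (∑ k ∈ Finset.univ.erase (m, j), L qS qU Wc f y (c k)))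
          = (Pc qS qU c * (Wc (f u s) s).p y) * (w qS qU s u*L qS qU Wc f y u/((w qS qU s u + (J:ℝ)*qS.p s)*(L qS qU Wc f y u + (M:ℝ)*(J:ℝ)*qY qS qU Wc f y)) *
              (1 + ((w qS qU s u + (J:ℝ)*qS.p s) - (w qS qU s u + (∑ j' ∈ Finset.univ.erase j, w qS qU s (c (m, j')))))/(w qS qU s u + (J:ℝ)*qS.p s) + ((L qS qU Wc f y u + (M:ℝ)*(J:ℝ)*qY qS qU Wc f y) - (L qS qU Wc f y u + (∑ k ∈ Finset.univ.erase (m, j), L qS qU Wc f y (c k))))/(L qS qU Wc f y u + (M:ℝ)*(J:ℝ)*qY qS qU Wc f y))) := by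
            ring
        _ ≤ (Pc qS qU c * (Wc (f u s) s).p y) * ((w qS qU s u/(w qS qU s u + (∑ j' ∈ Finset.univ.erase j, w qS qU s (c (m, j'))))) * (L qS qU Wc f y u/(L qS qU Wc f y u + (∑ k ∈ Finset.univ.erase (m, j), L qS qU Wc f y (c k))))) :=
            mul_le_mul_of_nonneg_left ht (mul_nonneg (Pc_nonneg qS qU c) hWp.le)
        _ = (1:ℝ) * Pc qS qU c * ((w qS qU s u / (w qS qU s u + (∑ j' ∈ Finset.univ.erase j, w qS qU s (c (m, j'))))) * ((Wc (f u s) s).p y * (L qS qU Wc f y u / (L qS qU Wc f y u + (∑ k ∈ Finset.univ.erase (m, j), L qS qU Wc f y (c k)))))) := by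
            ring
    · rw [if_neg hc]
      simp
  have hsum1 : ∑ c : Fin M × Fin J → 𝓤, (if c (m, j) = u then (1:ℝ) else 0) * Pc qS qU c = g qS qU u := by
    simpa only [Pc] using sum_ind_prod (g qS qU) (sum_g qS qU) ((m, j)) u
  have hsumA : ∑ c : Fin M × Fin J → 𝓤, (if c (m, j) = u then (1:ℝ) else 0) * Pc qS qU c * (∑ j' ∈ Finset.univ.erase j, w qS qU s (c (m, j')))
      = ((J:ℝ) - 1) * (g qS qU u * qS.p s) := by
    have h1 : ∀ c : Fin M × Fin J → 𝓤, (if c (m, j) = u then (1:ℝ) else 0) * Pc qS qU c * (∑ j' ∈ Finset.univ.erase j, w qS qU s (c (m, j')))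
        = ∑ j' ∈ Finset.univ.erase j, (if c (m, j) = u then (1:ℝ) else 0) * Pc qS qU c * w qS qU s (c (m, j')) :=
      fun c => Finset.mul_sum _ _ _
    rw [Finset.sum_congr rfl (fun c _ => h1 c), Finset.sum_comm]
    have h2 : ∀ j' ∈ Finset.univ.erase j,
        (∑ c : Fin M × Fin J → 𝓤, (if c (m, j) = u then (1:ℝ) else 0) * Pc qS qU c * w qS qU s (c (m, j')))
        = g qS qU u * qS.p s := by
      intro j' hj'
      have hne : ((m, j') : Fin M × Fin J) ≠ (m, j) := by
        intro h
        exact (Finset.ne_of_mem_erase hj') (congrArg Prod.snd h)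
      have h3 := sum_ind_prod_mul (g qS qU) (w qS qU s) (sum_g qS qU) ((m, j)) ((m, j')) hne u
      rw [sum_g_mul_w qS qU s] at h3
      simpa only [Pc] using h3
    rw [Finset.sum_congr rfl h2, Finset.sum_const, Finset.card_erase_of_mem (Finset.mem_univ j),
      Finset.card_univ, Fintype.card_fin, nsmul_eq_mul, Nat.cast_sub hJ, Nat.cast_one]
  have hsumB : ∑ c : Fin M × Fin J → 𝓤, (if c (m, j) = u then (1:ℝ) else 0) * Pc qS qU c * (∑ k ∈ Finset.univ.erase (m, j), L qS qU Wc f y (c k))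
      = ((M:ℝ)*(J:ℝ) - 1) * (g qS qU u * qY qS qU Wc f y) := by
    have h1 : ∀ c : Fin M × Fin J → 𝓤, (if c (m, j) = u then (1:ℝ) else 0) * Pc qS qU c * (∑ k ∈ Finset.univ.erase (m, j), L qS qU Wc f y (c k))
        = ∑ k ∈ Finset.univ.erase (m, j), (if c (m, j) = u then (1:ℝ) else 0) * Pc qS qU c * L qS qU Wc f y (c k) :=
      fun c => Finset.mul_sum _ _ _
    rw [Finset.sum_congr rfl (fun c _ => h1 c), Finset.sum_comm]
    have h2 : ∀ k ∈ Finset.univ.erase (m, j),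
        (∑ c : Fin M × Fin J → 𝓤, (if c (m, j) = u then (1:ℝ) else 0) * Pc qS qU c * L qS qU Wc f y (c k))
        = g qS qU u * qY qS qU Wc f y := by
      intro k hk
      have hne : k ≠ (m, j) := Finset.ne_of_mem_erase hk
      have h3 := sum_ind_prod_mul (g qS qU) (L qS qU Wc f y) (sum_g qS qU) ((m, j)) k hne u
      rw [sum_g_mul_L qS qU Wc f y] at h3
      simpa only [Pc] using h3
    rw [Finset.sum_congr rfl h2, Finset.sum_const, Finset.card_erase_of_mem (Finset.mem_univ (m, j)),
      Finset.card_univ, Fintype.card_prod, Fintype.card_fin, Fintype.card_fin, nsmul_eq_mul,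
      Nat.cast_sub (Nat.mul_pos hM hJ), Nat.cast_mul, Nat.cast_one]
  have hles : (Wc (f u s) s).p y*(w qS qU s u*L qS qU Wc f y u/((w qS qU s u + (J:ℝ)*qS.p s)*(L qS qU Wc f y u + (M:ℝ)*(J:ℝ)*qY qS qU Wc f y)))*(1 + (J:ℝ)*qS.p s/(w qS qU s u + (J:ℝ)*qS.p s) + (M:ℝ)*(J:ℝ)*qY qS qU Wc f y/(L qS qU Wc f y u + (M:ℝ)*(J:ℝ)*qY qS qU Wc f y)) * g qS qU u - (Wc (f u s) s).p y*(w qS qU s u*L qS qU Wc f y u/((w qS qU s u + (J:ℝ)*qS.p s)*(L qS qU Wc f y u + (M:ℝ)*(J:ℝ)*qY qS qU Wc f y)))/(w qS qU s u + (J:ℝ)*qS.p s) * (((J:ℝ) - 1)*(g qS qU u*qS.p s)) - (Wc (f u s) s).p y*(w qS qU s u*L qS qU Wc f y u/((w qS qU s u + (J:ℝ)*qS.p s)*(L qS qU Wc f y u + (M:ℝ)*(J:ℝ)*qY qS qU Wc f y)))/(L qS qU Wc f y u + (M:ℝ)*(J:ℝ)*qY qS qU Wc f y) * (((M:ℝ)*(J:ℝ)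 - 1)*(g qS qU u*qY qS qU Wc f y)) ≤ ∑ c : Fin M × Fin J → 𝓤, (if c (m, j) = u then (1:ℝ) else 0) * Pc qS qU c * ((w qS qU s u / tw qS qU c m s) * ((Wc (f u s) s).p y * (L qS qU Wc f y u / tL qS qU Wc f c y))) := by
    have h := Finset.sum_le_sum (fun c (_ : c ∈ Finset.univ) => hpoint c)
    rwa [Finset.sum_sub_distrib, Finset.sum_sub_distrib, ← Finset.mul_sum, ← Finset.mul_sum,
      ← Finset.mul_sum, hsum1, hsumA, hsumB] at h
  calc (J:ℝ)⁻¹ * (qUSY qS qU Wc f u s y *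
        ((1 + (J:ℝ)⁻¹ * (2:ℝ) ^ (iUS qS qU u s)) *
         (1 + (M:ℝ) * (J:ℝ) * (2:ℝ) ^ (-(iUY qS qU Wc f u y))))⁻¹)
      = (J:ℝ)⁻¹ * ((n qS qU s u * (Wc (f u s) s).p y) *
        ((1 + (J:ℝ)⁻¹ * (n qS qU s u / (g qS qU u * qS.p s))) *
         (1 + (M:ℝ) * (J:ℝ) * ((g qS qU u * qY qS qU Wc f y) / nL qS qU Wc f u y)))⁻¹) := by
        rw [hiUS, hiUY]
        rfl
    _ = qS.p s * ((Wc (f u s) s).p y * ((n qS qU s u/g qS qU u)*(nL qS qU Wc f u y/g qS qU u)/((n qS qU s u/g qS qU u + (J:ℝ)*qS.p s)*(nL qS qU Wc f u y/g qS qU u + (M:ℝ)*(J:ℝ)*qY qS qU Wc f y))) * g qS qU u) :=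
        core_calc (n qS qU s u) (nL qS qU Wc f u y) (g qS qU u) (qS.p s) (qY qS qU Wc f y) ((Wc (f u s) s).p y) (M:ℝ) (J:ℝ) hnn hnl hgu hσ hρ hMr hJr
    _ = qS.p s * ((Wc (f u s) s).p y * (w qS qU s u*L qS qU Wc f y u/((w qS qU s u + (J:ℝ)*qS.p s)*(L qS qU Wc f y u + (M:ℝ)*(J:ℝ)*qY qS qU Wc f y))) * g qS qU u) := rfl
    _ ≤ qS.p s * ((Wc (f u s) s).p y*(w qS qU s u*L qS qU Wc f y u/((w qS qU s u + (J:ℝ)*qS.p s)*(L qS qU Wc f y u + (M:ℝ)*(J:ℝ)*qY qS qU Wc f y)))*(1 + (J:ℝ)*qS.p s/(w qS qU s u + (J:ℝ)*qS.p s) + (M:ℝ)*(J:ℝ)*qY qS qU Wc f y/(L qS qU Wc f y u + (M:ℝ)*(J:ℝ)*qY qS qU Wc f y)) * g qS qU u - (Wc (f u s) s).p y*(w qS qU s u*L qS qU Wc f y u/((w qS qU s u + (J:ℝ)*qS.p s)*(L qS qU Wc f y u + (M:ℝ)*(J:ℝ)*qY qS qU Wc f y)))/(w qS qU s u + (J:ℝ)*qS.p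 s) * (((J:ℝ) - 1)*(g qS qU u*qS.p s)) - (Wc (f u s) s).p y*(w qS qU s u*L qS qU Wc f y u/((w qS qU s u + (J:ℝ)*qS.p s)*(L qS qU Wc f y u + (M:ℝ)*(J:ℝ)*qY qS qU Wc f y)))/(L qS qU Wc f y u + (M:ℝ)*(J:ℝ)*qY qS qU Wc f y) * (((M:ℝ)*(J:ℝ) - 1)*(g qS qU u*qY qS qU Wc f y))) := by
        have e2 : 0 ≤ (Wc (f u s) s).p y*(w qS qU s u*L qS qU Wc f y u/((w qS qU s u + (J:ℝ)*qS.p s)*(L qS qU Wc f y u + (M:ℝ)*(J:ℝ)*qY qS qU Wc f y)))*(g qS qU u*qS.p s)/(w qS qU s u + (J:ℝ)*qS.p s) :=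
          div_nonneg (mul_nonneg (mul_nonneg hWp.le hTH) (mul_nonneg hgu.le hσ.le)) hP0.le
        have e3 : 0 ≤ (Wc (f u s) s).p y*(w qS qU s u*L qS qU Wc f y u/((w qS qU s u + (J:ℝ)*qS.p s)*(L qS qU Wc f y u + (M:ℝ)*(J:ℝ)*qY qS qU Wc f y)))*(g qS qU u*qY qS qU Wc f y)/(L qS qU Wc f y u + (M:ℝ)*(J:ℝ)*qY qS qU Wc f y) :=
          div_nonneg (mul_nonneg (mul_nonneg hWp.le hTH) (mul_nonneg hgu.le hρ.le)) hQ0.le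
        have claim1 : (Wc (f u s) s).p y*(w qS qU s u*L qS qU Wc f y u/((w qS qU s u + (J:ℝ)*qS.p s)*(L qS qU Wc f y u + (M:ℝ)*(J:ℝ)*qY qS qU Wc f y)))*(1 + (J:ℝ)*qS.p s/(w qS qU s u + (J:ℝ)*qS.p s) + (M:ℝ)*(J:ℝ)*qY qS qU Wc f y/(L qS qU Wc f y u + (M:ℝ)*(J:ℝ)*qY qS qU Wc f y)) * g qS qU u - (Wc (f u s) s).p y*(w qS qU s u*L qS qU Wc f y u/((w qS qU s u + (J:ℝ)*qS.p s)*(L qS qU Wc f y u + (M:ℝ)*(J:ℝ)*qY qS qU Wc f y)))/(w qS qU s u + (J:ℝ)*qS.p s) * (((J:ℝ) - 1)*(g qS qU u*qS.p s)) - (Wc (f u s) s).p y*(w qS qU s u*L qS qU Wc f y u/((w qS qU s u + (J:ℝ)*qS.p s)*(L qS qU Wc f y u + (M:ℝ)*(J:ℝ)*qY qS qU Wc f y)))/(L qS qU Wc f y u + (M:ℝ)*(J:ℝ)*qY qS qU Wc f y) * (((M:ℝ)*(J:ℝ) - 1)*(g qS qU u*qY qS qU Wc f y)) = (Wc (f u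 s) s).p y*(w qS qU s u*L qS qU Wc f y u/((w qS qU s u + (J:ℝ)*qS.p s)*(L qS qU Wc f y u + (M:ℝ)*(J:ℝ)*qY qS qU Wc f y)))*g qS qU u + (Wc (f u s) s).p y*(w qS qU s u*L qS qU Wc f y u/((w qS qU s u + (J:ℝ)*qS.p s)*(L qS qU Wc f y u + (M:ℝ)*(J:ℝ)*qY qS qU Wc f y)))*(g qS qU u*qS.p s)/(w qS qU s u + (J:ℝ)*qS.p s) + (Wc (f u s) s).p y*(w qS qU s u*L qS qU Wc f y u/((w qS qU s u + (J:ℝ)*qS.p s)*(L qS qU Wc f y u + (M:ℝ)*(J:ℝ)*qY qS qU Wc f y)))*(g qS qU u*qY qS qU Wc f y)/(L qS qU Wc f y u + (M:ℝ)*(J:ℝ)*qY qS qU Wc f y) := by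
          ring
        rw [claim1]
        nlinarith [hσ, e2, e3]
    _ ≤ qS.p s * ∑ c : Fin M × Fin J → 𝓤, (if c (m, j) = u then (1:ℝ) else 0) * Pc qS qU c * ((w qS qU s u / tw qS qU c m s) * ((Wc (f u s) s).p y * (L qS qU Wc f y u / tL qS qU Wc f c y))) :=
        mul_le_mul_of_nonneg_left hles hσ.le


lemma hPsum : ∑ c : Fin M × Fin J → 𝓤, Pc qS qU c = 1 := by
  simp only [Pc]
  rw [sum_prod_eval (fun (_ : Fin M × Fin J) (v : 𝓤) => g qS qU v)]
  simp [sum_g qS qU]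

lemma hsplit (m : Fin M) (j : Fin J) (s : 𝓢) (y : 𝓨) :
    ∑ c : Fin M × Fin J → 𝓤, Pc qS qU c * ((w qS qU s (c (m, j)) / tw qS qU c m s) * ((Wc (f (c (m, j)) s) s).p y * (L qS qU Wc f y (c (m, j)) / tL qS qU Wc f c y)))
      = ∑ u : 𝓤, ∑ c : Fin M × Fin J → 𝓤, (if c (m, j) = u then (1:ℝ) else 0) * Pc qS qU c * ((w qS qU s u / tw qS qU c m s) * ((Wc (f u s) s).p y * (L qS qU Wc f y u / tL qS qU Wc f c y))) := by
  rw [Finset.sum_comm]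
  refine Finset.sum_congr rfl fun c _ => ?_
  symm
  calc ∑ u : 𝓤, (if c (m, j) = u then (1:ℝ) else 0) * Pc qS qU c * ((w qS qU s u / tw qS qU c m s) * ((Wc (f u s) s).p y * (L qS qU Wc f y u / tL qS qU Wc f c y)))
      = ∑ u : 𝓤, (if c (m, j) = u then Pc qS qU c * ((w qS qU s u / tw qS qU c m s) * ((Wc (f u s) s).p y * (L qS qU Wc f y u / tL qS qU Wc f c y))) else 0) := by
        refine Finset.sum_congr rfl fun u _ => ?_
        split_ifs <;> simp
    _ = Pc qS qU c * ((w qS qU s (c (m, j)) / tw qS qU c m s) * ((Wc (f (c (m, j)) s) s).p y * (L qS qU Wc f y (c (m, j)) / tL qS qU Wc f c y))) := by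
        rw [Finset.sum_ite_eq]
        simp

lemma hmain (hM : 0 < M) (hJ : 0 < J) (m : Fin M) (j : Fin J) (s : 𝓢) (y : 𝓨) :
    ∑ u : 𝓤, (J:ℝ)⁻¹ * (qUSY qS qU Wc f u s y * ((1 + (J:ℝ)⁻¹ * (2:ℝ) ^ (iUS qS qU u s)) * (1 + (M:ℝ) * (J:ℝ) * (2:ℝ) ^ (-(iUY qS qU Wc f u y))))⁻¹)
      ≤ qS.p s * ∑ c : Fin M × Fin J → 𝓤, Pc qS qU c * ((w qS qU s (c (m, j)) / tw qS qU c m s) * ((Wc (f (c (m, j)) s) s).p y * (L qS qU Wc f y (c (m, j)) / tL qS qU Wc f c y))) := by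
  calc ∑ u : 𝓤, (J:ℝ)⁻¹ * (qUSY qS qU Wc f u s y * ((1 + (J:ℝ)⁻¹ * (2:ℝ) ^ (iUS qS qU u s)) * (1 + (M:ℝ) * (J:ℝ) * (2:ℝ) ^ (-(iUY qS qU Wc f u y))))⁻¹)
      ≤ ∑ u : 𝓤, qS.p s * ∑ c : Fin M × Fin J → 𝓤, (if c (m, j) = u then (1:ℝ) else 0) * Pc qS qU c * ((w qS qU s u / tw qS qU c m s) * ((Wc (f u s) s).p y * (L qS qU Wc f y u / tL qS qU Wc f c y))) :=
        Finset.sum_le_sum fun u _ => core qS qU Wc f hM hJ m j s y u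
    _ = qS.p s * ∑ u : 𝓤, ∑ c : Fin M × Fin J → 𝓤, (if c (m, j) = u then (1:ℝ) else 0) * Pc qS qU c * ((w qS qU s u / tw qS qU c m s) * ((Wc (f u s) s).p y * (L qS qU Wc f y u / tL qS qU Wc f c y))) :=
        (Finset.mul_sum _ _ _).symm
    _ = qS.p s * ∑ c : Fin M × Fin J → 𝓤, Pc qS qU c * ((w qS qU s (c (m, j)) / tw qS qU c m s) * ((Wc (f (c (m, j)) s) s).p y * (L qS qU Wc f y (c (m, j)) / tL qS qU Wc f c y))) := by
        rw [← hsplit qS qU Wc f m j s y]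

lemma hpush :
    ∑ c : Fin M × Fin J → 𝓤, Pc qS qU c *
        (∑ m : Fin M, ∑ s : 𝓢, ∑ y : 𝓨, ∑ j : Fin J, (1 / (M:ℝ)) * qS.p s * ((w qS qU s (c (m, j)) / tw qS qU c m s) * ((Wc (f (c (m, j)) s) s).p y * (L qS qU Wc f y (c (m, j)) / tL qS qU Wc f c y))))
      = ∑ m : Fin M, ∑ s : 𝓢, ∑ y : 𝓨, ∑ j : Fin J,
          (1 / (M:ℝ)) * (qS.p s * ∑ c : Fin M × Fin J → 𝓤, Pc qS qU c * ((w qS qU s (c (m, j)) / tw qS qU c m s) * ((Wc (f (c (m, j)) s) s).p y * (L qS qU Wc f y (c (m, j)) / tL qS qU Wc f c y)))) := by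
  simp only [Finset.mul_sum]
  rw [Finset.sum_comm]
  refine Finset.sum_congr rfl fun m _ => ?_
  rw [Finset.sum_comm]
  refine Finset.sum_congr rfl fun s _ => ?_
  rw [Finset.sum_comm]
  refine Finset.sum_congr rfl fun y _ => ?_
  rw [Finset.sum_comm]
  refine Finset.sum_congr rfl fun j _ => ?_
  refine Finset.sum_congr rfl fun c _ => ?_
  ring

lemma hcount (hM : 0 < M) (hJ : 0 < J) :
    ∑ m : Fin M, ∑ s : 𝓢, ∑ y : 𝓨, ∑ j : Fin J,
        (1 / (M:ℝ)) * (∑ u : 𝓤, (J:ℝ)⁻¹ * (qUSY qS qU Wc f u s y * ((1 + (J:ℝ)⁻¹ * (2:ℝ) ^ (iUS qS qU u s)) * (1 + (M:ℝ) * (J:ℝ) * (2:ℝ) ^ (-(iUY qS qU Wc f u y))))⁻¹))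
      = ∑ u : 𝓤, ∑ s : 𝓢, ∑ y : 𝓨, qUSY qS qU Wc f u s y * ((1 + (J:ℝ)⁻¹ * (2:ℝ) ^ (iUS qS qU u s)) * (1 + (M:ℝ) * (J:ℝ) * (2:ℝ) ^ (-(iUY qS qU Wc f u y))))⁻¹ := by
  have hMne : ((M:ℝ)) ≠ 0 := by
    have : (0:ℝ) < (M:ℝ) := by exact_mod_cast hM
    exact this.ne'
  have hJne : ((J:ℝ)) ≠ 0 := by
    have : (0:ℝ) < (J:ℝ) := by exact_mod_cast hJ
    exact this.ne'
  have hid : ∀ x : ℝ, (M:ℝ) * ((J:ℝ) * ((1/(M:ℝ)) * ((J:ℝ)⁻¹ * x))) = x := by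
    intro x
    field_simp
  calc ∑ m : Fin M, ∑ s : 𝓢, ∑ y : 𝓨, ∑ j : Fin J,
        (1 / (M:ℝ)) * (∑ u : 𝓤, (J:ℝ)⁻¹ * (qUSY qS qU Wc f u s y * ((1 + (J:ℝ)⁻¹ * (2:ℝ) ^ (iUS qS qU u s)) * (1 + (M:ℝ) * (J:ℝ) * (2:ℝ) ^ (-(iUY qS qU Wc f u y))))⁻¹))
      = ∑ m : Fin M, ∑ s : 𝓢, ∑ y : 𝓨,
          (J:ℝ) * ((1 / (M:ℝ)) * (∑ u : 𝓤, (J:ℝ)⁻¹ * (qUSY qS qU Wc f u s y * ((1 + (J:ℝ)⁻¹ * (2:ℝ) ^ (iUS qS qU u s)) * (1 + (M:ℝ) * (J:ℝ) * (2:ℝ) ^ (-(iUY qS qU Wc f u y))))⁻¹))) := by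
        refine Finset.sum_congr rfl fun m _ => Finset.sum_congr rfl fun s _ =>
          Finset.sum_congr rfl fun y _ => ?_
        rw [Finset.sum_const, Finset.card_univ, Fintype.card_fin, nsmul_eq_mul]
    _ = (M:ℝ) * ∑ s : 𝓢, ∑ y : 𝓨,
          (J:ℝ) * ((1 / (M:ℝ)) * (∑ u : 𝓤, (J:ℝ)⁻¹ * (qUSY qS qU Wc f u s y * ((1 + (J:ℝ)⁻¹ * (2:ℝ) ^ (iUS qS qU u s)) * (1 + (M:ℝ) * (J:ℝ) * (2:ℝ) ^ (-(iUY qS qU Wc f u y))))⁻¹))) := by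
        rw [Finset.sum_const, Finset.card_univ, Fintype.card_fin, nsmul_eq_mul]
    _ = ∑ s : 𝓢, ∑ y : 𝓨, ∑ u : 𝓤, qUSY qS qU Wc f u s y * ((1 + (J:ℝ)⁻¹ * (2:ℝ) ^ (iUS qS qU u s)) * (1 + (M:ℝ) * (J:ℝ) * (2:ℝ) ^ (-(iUY qS qU Wc f u y))))⁻¹ := by
        rw [Finset.mul_sum]
        refine Finset.sum_congr rfl fun s _ => ?_
        rw [Finset.mul_sum]
        refine Finset.sum_congr rfl fun y _ => ?_
        rw [Finset.mul_sum, Finset.mul_sum, Finset.mul_sum]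
        refine Finset.sum_congr rfl fun u _ => ?_
        exact hid _
    _ = ∑ s : 𝓢, ∑ u : 𝓤, ∑ y : 𝓨, qUSY qS qU Wc f u s y * ((1 + (J:ℝ)⁻¹ * (2:ℝ) ^ (iUS qS qU u s)) * (1 + (M:ℝ) * (J:ℝ) * (2:ℝ) ^ (-(iUY qS qU Wc f u y))))⁻¹ :=
        Finset.sum_congr rfl fun s _ => Finset.sum_comm
    _ = ∑ u : 𝓤, ∑ s : 𝓢, ∑ y : 𝓨, qUSY qS qU Wc f u s y * ((1 + (J:ℝ)⁻¹ * (2:ℝ) ^ (iUS qS qU u s)) * (1 + (M:ℝ) * (J:ℝ) * (2:ℝ) ^ (-(iUY qS qU Wc f u y))))⁻¹ := Finset.sum_comm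

lemma exists_code (hM : 0 < M) (hJ : 0 < J) :
    ∃ (e : Fin M → 𝓢 → FinPMF 𝓧) (d : 𝓨 → FinPMF (Fin M)),
      (∑ u : 𝓤, ∑ s : 𝓢, ∑ y : 𝓨, qUSY qS qU Wc f u s y * ((1 + (J:ℝ)⁻¹ * (2:ℝ) ^ (iUS qS qU u s)) * (1 + (M:ℝ) * (J:ℝ) * (2:ℝ) ^ (-(iUY qS qU Wc f u y))))⁻¹) ≤ pCorrectGP M qS Wc e d := by
  have hRHS_le : (∑ u : 𝓤, ∑ s : 𝓢, ∑ y : 𝓨, qUSY qS qU Wc f u s y * ((1 + (J:ℝ)⁻¹ * (2:ℝ) ^ (iUS qS qU u s)) * (1 + (M:ℝ) * (J:ℝ) * (2:ℝ) ^ (-(iUY qS qU Wc f u y))))⁻¹)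
      ≤ ∑ c : Fin M × Fin J → 𝓤, Pc qS qU c *
          pCorrectGP M qS Wc (enc qS qU f hJ c) (dec qS qU Wc f hM c) := by
    calc (∑ u : 𝓤, ∑ s : 𝓢, ∑ y : 𝓨, qUSY qS qU Wc f u s y * ((1 + (J:ℝ)⁻¹ * (2:ℝ) ^ (iUS qS qU u s)) * (1 + (M:ℝ) * (J:ℝ) * (2:ℝ) ^ (-(iUY qS qU Wc f u y))))⁻¹)
        = ∑ m : Fin M, ∑ s : 𝓢, ∑ y : 𝓨, ∑ j : Fin J,
            (1 / (M:ℝ)) * (∑ u : 𝓤, (J:ℝ)⁻¹ * (qUSY qS qU Wc f u s y * ((1 + (J:ℝ)⁻¹ * (2:ℝ) ^ (iUS qS qU u s)) * (1 + (M:ℝ) * (J:ℝ) * (2:ℝ) ^ (-(iUY qS qU Wc f u y))))⁻¹)) :=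
          (hcount qS qU Wc f hM hJ).symm
      _ ≤ ∑ m : Fin M, ∑ s : 𝓢, ∑ y : 𝓨, ∑ j : Fin J,
            (1 / (M:ℝ)) * (qS.p s * ∑ c : Fin M × Fin J → 𝓤, Pc qS qU c * ((w qS qU s (c (m, j)) / tw qS qU c m s) * ((Wc (f (c (m, j)) s) s).p y * (L qS qU Wc f y (c (m, j)) / tL qS qU Wc f c y)))) := by
          refine Finset.sum_le_sum fun m _ => Finset.sum_le_sum fun s _ =>
            Finset.sum_le_sum fun y _ => Finset.sum_le_sum fun j _ => ?_
          exact mul_le_mul_of_nonneg_left (hmain qS qU Wc f hM hJ m j s y) (by positivity)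
      _ = ∑ c : Fin M × Fin J → 𝓤, Pc qS qU c *
            (∑ m : Fin M, ∑ s : 𝓢, ∑ y : 𝓨, ∑ j : Fin J, (1 / (M:ℝ)) * qS.p s * ((w qS qU s (c (m, j)) / tw qS qU c m s) * ((Wc (f (c (m, j)) s) s).p y * (L qS qU Wc f y (c (m, j)) / tL qS qU Wc f c y)))) :=
          (hpush qS qU Wc f).symm
      _ ≤ ∑ c : Fin M × Fin J → 𝓤, Pc qS qU c *
            pCorrectGP M qS Wc (enc qS qU f hJ c) (dec qS qU Wc f hM c) :=
          Finset.sum_le_sum fun c _ => mul_le_mul_of_nonneg_left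
            (pCorrect_ge qS qU Wc f hM hJ c) (Pc_nonneg qS qU c)
  by_contra hcon
  push_neg at hcon
  have hlt : ∀ c : Fin M × Fin J → 𝓤,
      pCorrectGP M qS Wc (enc qS qU f hJ c) (dec qS qU Wc f hM c)
        < ∑ u : 𝓤, ∑ s : 𝓢, ∑ y : 𝓨, qUSY qS qU Wc f u s y * ((1 + (J:ℝ)⁻¹ * (2:ℝ) ^ (iUS qS qU u s)) * (1 + (M:ℝ) * (J:ℝ) * (2:ℝ) ^ (-(iUY qS qU Wc f u y))))⁻¹ :=
    fun c => hcon (enc qS qU f hJ c) (dec qS qU Wc f hM c)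
  obtain ⟨c0, hc0⟩ : ∃ c : Fin M × Fin J → 𝓤, Pc qS qU c ≠ 0 := by
    by_contra hall
    push_neg at hall
    have := hPsum qS qU (M := M) (J := J)
    rw [Finset.sum_eq_zero (fun c _ => hall c)] at this
    exact one_ne_zero this.symm
  have hc0pos : 0 < Pc qS qU c0 := lt_of_le_of_ne (Pc_nonneg qS qU c0) (Ne.symm hc0)
  have hstrict : ∑ c : Fin M × Fin J → 𝓤, Pc qS qU c *
        pCorrectGP M qS Wc (enc qS qU f hJ c) (dec qS qU Wc f hM c)
      < ∑ c : Fin M × Fin J → 𝓤, Pc qS qU c * (∑ u : 𝓤, ∑ s : 𝓢, ∑ y : 𝓨, qUSY qS qU Wc f u s y * ((1 + (J:ℝ)⁻¹ * (2:ℝ) ^ (iUS qS qU u s)) * (1 + (M:ℝ) * (J:ℝ) * (2:ℝ) ^ (-(iUY qS qU Wc f u y))))⁻¹) := by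
    refine Finset.sum_lt_sum (fun c _ => mul_le_mul_of_nonneg_left (hlt c).le (Pc_nonneg qS qU c))
      ⟨c0, Finset.mem_univ c0, mul_lt_mul_of_pos_left (hlt c0) hc0pos⟩
  rw [← Finset.sum_mul, hPsum qS qU, one_mul] at hstrict
  exact absurd (lt_of_le_of_lt hRHS_le hstrict) (lt_irrefl _)

end GPaux

/-- One-shot achievability for the Gelfand–Pinsker channel:
there is an `M`-code with
`P(M̂ = M) ≥ E_q [ 1 / ((1 + J⁻¹ 2^{i_q(U;S)}) (1 + M J 2^{-i_q(U;Y)})) ]`. -/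
theorem oneShot_gelfand_pinsker (qS : FinPMF 𝓢) (W : 𝓧 → 𝓢 → FinPMF 𝓨)
    (qU : 𝓢 → FinPMF 𝓤) (f : 𝓤 → 𝓢 → 𝓧) (M J : ℕ) (hM : 0 < M) (hJ : 0 < J) :
    ∃ (enc : Fin M → 𝓢 → FinPMF 𝓧) (dec : 𝓨 → FinPMF (Fin M)),
      pCorrectGP M qS W enc dec ≥
        ∑ u : 𝓤, ∑ s : 𝓢, ∑ y : 𝓨, qUSY qS qU W f u s y *
          ((1 + (J : ℝ)⁻¹ * (2 : ℝ) ^ (iUS qS qU u s)) *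
           (1 + (M : ℝ) * (J : ℝ) * (2 : ℝ) ^ (-(iUY qS qU W f u y))))⁻¹ := by
  obtain ⟨e, d, h⟩ := GPaux.exists_code qS qU W f (M := M) (J := J) hM hJ
  exact ⟨e, d, h⟩
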